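/- arXiv:1905.05499 — 4 statements merged into one kernel-verified Lean document; each statement's English description precedes it below -/
import Mathlib

section
/- Let m ≥ 1. There exists a constant c = c(m) ≥ 1 such that for all u, a ∈ ℝ^N, defining the boundary term b[⌊u⌋^m, ⌊a⌋^m] := (m/(m+1))·(|a|^{m+1} - |u|^{m+1}) - u · (⌊a⌋^m - ⌊u⌋^m), one has (1/c)·|⌊u⌋^{(m+1)/2} - ⌊a⌋^{(m+1)/2}|² ≤ b[⌊u⌋^m, ⌊a⌋^m] ≤ c·|⌊u⌋^{(m+1)/2} - ⌊a⌋^{(m+1)/2}|². -/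
open Real

/-- Signed power `⌊v⌋^α := |v|^{α-1} v` on `ℝ^N`. -/
noncomputable def spow {N : ℕ} (α : ℝ) (v : EuclideanSpace ℝ (Fin N)) :
    EuclideanSpace ℝ (Fin N) := ‖v‖ ^ (α - 1) • v

/-- The boundary term `b[⌊u⌋^m, ⌊a⌋^m]`. -/
noncomputable def bTerm {N : ℕ} (m : ℝ) (u a : EuclideanSpace ℝ (Fin N)) : ℝ :=
  m / (m + 1) * (‖a‖ ^ (m + 1) - ‖u‖ ^ (m + 1)) -
    (inner ℝ u (spow m a - spow m u) : ℝ)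

private lemma rpow_mul_self' {s : ℝ} (hs : 0 ≤ s) {e : ℝ} (he : 0 < e + 1) :
    s ^ e * s = s ^ (e + 1) := by
  rcases hs.eq_or_lt with h | h
  · rw [← h, Real.zero_rpow he.ne', mul_zero]
  · rw [Real.rpow_add h, Real.rpow_one]

private lemma rpow_sub_one_mul {s : ℝ} (hs : 0 ≤ s) {e : ℝ} (he : 0 < e) :
    s ^ (e - 1) * s = s ^ e := by
  have := rpow_mul_self' hs (e := e - 1) (by linarith)
  simpa using this

private lemma linear_bound {C k p r : ℝ} (hp : |p| ≤ r) (h1 : 0 ≤ C + k * r)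
    (h2 : 0 ≤ C - k * r) : 0 ≤ C + k * p := by
  obtain ⟨h3, h4⟩ := abs_le.mp hp
  rcases le_total 0 k with hk | hk
  · nlinarith
  · nlinarith

set_option maxHeartbeats 2000000 in
private lemma key (m : ℝ) (hm : 1 ≤ m) (s t p : ℝ) (hs : 0 ≤ s) (ht : 0 ≤ t)
    (hp : |p| ≤ s * t) :
    s ^ (m+1) - 2 * (s ^ ((m+1)/2 - 1) * t ^ ((m+1)/2 - 1) * p) + t ^ (m+1)
        ≤ 2 * (m+1) * (m / (m+1) * (t ^ (m+1) - s ^ (m+1)) - (t ^ (m-1) * p - s ^ (m+1))) ∧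
      m / (m+1) * (t ^ (m+1) - s ^ (m+1)) - (t ^ (m-1) * p - s ^ (m+1))
        ≤ 2 * (m+1) * (s ^ (m+1) - 2 * (s ^ ((m+1)/2 - 1) * t ^ ((m+1)/2 - 1) * p) + t ^ (m+1)) := by
  have hm0 : (0:ℝ) < m := by linarith
  have hm1 : (0:ℝ) < m + 1 := by linarith
  have hne : m + 1 ≠ 0 := hm1.ne'
  have hβ : (0:ℝ) < (m+1)/2 := by linarith
  -- nonnegativity facts
  have ha1 : 0 ≤ s ^ (m+1) := Real.rpow_nonneg hs _
  have ha2 : 0 ≤ t ^ (m+1) := Real.rpow_nonneg ht _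
  have hg0 : 0 ≤ s ^ ((m+1)/2) * t ^ ((m+1)/2) :=
    mul_nonneg (Real.rpow_nonneg hs _) (Real.rpow_nonneg ht _)
  have hx0 : 0 ≤ s * t ^ m := mul_nonneg hs (Real.rpow_nonneg ht _)
  have hy0 : 0 ≤ s ^ m * t := mul_nonneg (Real.rpow_nonneg hs _) ht
  -- product identities
  have hss : s ^ m * s = s ^ (m+1) := rpow_mul_self' hs hm1
  have htt : t ^ m * t = t ^ (m+1) := rpow_mul_self' ht hm1
  have hKst : (s ^ ((m+1)/2 - 1) * t ^ ((m+1)/2 - 1)) * (s * t)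
      = s ^ ((m+1)/2) * t ^ ((m+1)/2) := by
    have e1 := rpow_sub_one_mul hs hβ
    have e2 := rpow_sub_one_mul ht hβ
    calc (s ^ ((m+1)/2 - 1) * t ^ ((m+1)/2 - 1)) * (s * t)
        = (s ^ ((m+1)/2 - 1) * s) * (t ^ ((m+1)/2 - 1) * t) := by ring
      _ = s ^ ((m+1)/2) * t ^ ((m+1)/2) := by rw [e1, e2]
  have hTst : t ^ (m-1) * (s * t) = s * t ^ m := by
    have e3 := rpow_sub_one_mul ht hm0
    calc t ^ (m-1) * (s * t) = s * (t ^ (m-1) * t) := by ring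
      _ = s * t ^ m := by rw [e3]
  -- E1 : (m+1) * (s^m * t) ≤ m * s^(m+1) + t^(m+1)
  have E1 : (m+1) * (s ^ m * t) ≤ m * s ^ (m+1) + t ^ (m+1) := by
    have h := Real.geom_mean_le_arith_mean2_weighted (w₁ := m/(m+1)) (w₂ := 1/(m+1))
      (p₁ := s ^ (m+1)) (p₂ := t ^ (m+1)) (by positivity) (by positivity) ha1 ha2
      (by field_simp; try ring)
    have l1 : (s ^ (m+1)) ^ (m/(m+1)) = s ^ m := by
      rw [← Real.rpow_mul hs]; congr 1; field_simp
    have l2 : (t ^ (m+1)) ^ (1/(m+1)) = t := by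
      rw [← Real.rpow_mul ht, show (m+1)*(1/(m+1)) = 1 by field_simp; try ring, Real.rpow_one]
    rw [l1, l2] at h
    have h2 := mul_le_mul_of_nonneg_left h hm1.le
    have h3 : (m+1) * (m/(m+1) * s ^ (m+1) + 1/(m+1) * t ^ (m+1))
        = m * s ^ (m+1) + t ^ (m+1) := by field_simp; try ring
    linarith
  -- E2 : (m+1) * (s * t^m) ≤ s^(m+1) + m * t^(m+1)
  have E2 : (m+1) * (s * t ^ m) ≤ s ^ (m+1) + m * t ^ (m+1) := by
    have h := Real.geom_mean_le_arith_mean2_weighted (w₁ := 1/(m+1)) (w₂ := m/(m+1))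
      (p₁ := s ^ (m+1)) (p₂ := t ^ (m+1)) (by positivity) (by positivity) ha1 ha2
      (by field_simp; try ring)
    have l1 : (s ^ (m+1)) ^ (1/(m+1)) = s := by
      rw [← Real.rpow_mul hs, show (m+1)*(1/(m+1)) = 1 by field_simp; try ring, Real.rpow_one]
    have l2 : (t ^ (m+1)) ^ (m/(m+1)) = t ^ m := by
      rw [← Real.rpow_mul ht]; congr 1; field_simp
    rw [l1, l2] at h
    have h2 := mul_le_mul_of_nonneg_left h hm1.le
    have h3 : (m+1) * (1/(m+1) * s ^ (m+1) + m/(m+1) * t ^ (m+1))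
        = s ^ (m+1) + m * t ^ (m+1) := by field_simp; try ring
    linarith
  -- E3 : 2 * (s^β * t^β) ≤ s^m * t + s * t^m
  have E3 : 2 * (s ^ ((m+1)/2) * t ^ ((m+1)/2)) ≤ s ^ m * t + s * t ^ m := by
    have h := Real.geom_mean_le_arith_mean2_weighted (w₁ := 1/2) (w₂ := 1/2)
      (p₁ := s ^ m * t) (p₂ := s * t ^ m) (by norm_num) (by norm_num) hy0 hx0
      (by norm_num)
    have l1 : (s ^ m * t) ^ ((1:ℝ)/2) * (s * t ^ m) ^ ((1:ℝ)/2)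
        = s ^ ((m+1)/2) * t ^ ((m+1)/2) := by
      rw [← Real.mul_rpow hy0 hx0]
      have e : s ^ m * t * (s * t ^ m) = s ^ (m+1) * t ^ (m+1) := by
        rw [← hss, ← htt]; ring
      rw [e, Real.mul_rpow ha1 ha2, ← Real.rpow_mul hs, ← Real.rpow_mul ht]
      congr 2 <;> ring
    rw [l1] at h
    linarith
  -- E4 : (m+1) * (s * t^m) ≤ 2 * (s^β * t^β) + (m-1) * t^(m+1)
  have E4 : (m+1) * (s * t ^ m) ≤ 2 * (s ^ ((m+1)/2) * t ^ ((m+1)/2)) + (m-1) * t ^ (m+1) := by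
    have h := Real.geom_mean_le_arith_mean2_weighted (w₁ := 2/(m+1)) (w₂ := (m-1)/(m+1))
      (p₁ := s ^ ((m+1)/2) * t ^ ((m+1)/2)) (p₂ := t ^ (m+1)) (by positivity)
      (div_nonneg (by linarith) (by linarith)) hg0 ha2 (by field_simp; try ring)
    have l1 : (s ^ ((m+1)/2) * t ^ ((m+1)/2)) ^ (2/(m+1)) * (t ^ (m+1)) ^ ((m-1)/(m+1))
        = s * t ^ m := by
      rw [Real.mul_rpow (Real.rpow_nonneg hs _) (Real.rpow_nonneg ht _),
        ← Real.rpow_mul hs, ← Real.rpow_mul ht, ← Real.rpow_mul ht,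
        show (m+1)/2*(2/(m+1)) = 1 by (field_simp; try ring); try ring, show (m+1)*((m-1)/(m+1)) = m - 1 by (field_simp; try ring), Real.rpow_one, Real.rpow_one]
      have e3 := rpow_sub_one_mul ht hm0
      calc s * t * t ^ (m-1) = s * (t ^ (m-1) * t) := by ring
        _ = s * t ^ m := by rw [e3]
    rw [l1] at h
    have h2 := mul_le_mul_of_nonneg_left h hm1.le
    have h3 : (m+1) * (2/(m+1) * (s ^ ((m+1)/2) * t ^ ((m+1)/2)) + (m-1)/(m+1) * t ^ (m+1))
        = 2 * (s ^ ((m+1)/2) * t ^ ((m+1)/2)) + (m-1) * t ^ (m+1) := by field_simp; try ring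
    linarith
  -- E5 : s * t^m + s^m * t ≤ s^(m+1) + t^(m+1)
  have E5 : s * t ^ m + s ^ m * t ≤ s ^ (m+1) + t ^ (m+1) := by
    have hsgn : 0 ≤ (s ^ m - t ^ m) * (s - t) := by
      rcases le_total s t with h | h
      · have := Real.rpow_le_rpow hs h hm0.le; nlinarith
      · have := Real.rpow_le_rpow ht h hm0.le; nlinarith
    nlinarith [hsgn, hss, htt]
  -- more nonneg facts
  have hmA2 : 0 ≤ (m-1) * t ^ (m+1) := mul_nonneg (by linarith) ha2
  have hmX : 0 ≤ m * (s * t ^ m) := mul_nonneg hm0.le hx0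
  have hDp : 0 ≤ s ^ (m+1) + t ^ (m+1) - 2 * (s ^ ((m+1)/2) * t ^ ((m+1)/2)) := by linarith
  -- scaled inequality 1 : (m+1) * D ≤ 2*(m+1) * b'
  have S1 : (m+1) * (s ^ (m+1) - 2 * (s ^ ((m+1)/2 - 1) * t ^ ((m+1)/2 - 1) * p) + t ^ (m+1))
      ≤ 2 * (m+1) * (m * (t ^ (m+1) - s ^ (m+1)) - ((m+1) * (t ^ (m-1) * p) - (m+1) * s ^ (m+1))) := by
    have hi1 : 0 ≤ s ^ (m+1) + (2*m-1) * t ^ (m+1)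
        + 2 * (s ^ ((m+1)/2) * t ^ ((m+1)/2)) - 2 * ((m+1) * (s * t ^ m)) := by
      linarith [E4, hDp]
    have hi2 : 0 ≤ s ^ (m+1) + (2*m-1) * t ^ (m+1)
        - 2 * (s ^ ((m+1)/2) * t ^ ((m+1)/2)) + 2 * ((m+1) * (s * t ^ m)) := by
      linarith [hDp, hmA2, hx0, hmX]
    have hj1 := mul_nonneg hm1.le hi1
    have hj2 := mul_nonneg hm1.le hi2
    have e : (2*(m+1)*(s ^ ((m+1)/2 - 1) * t ^ ((m+1)/2 - 1)) - 2*(m+1)^2*(t ^ (m-1))) * (s*t)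
        = 2*(m+1)*(s ^ ((m+1)/2) * t ^ ((m+1)/2)) - 2*(m+1)^2*(s * t ^ m) := by
      linear_combination 2*(m+1)*hKst - 2*(m+1)^2*hTst
    have h1 : 0 ≤ (2*(m+1)*(m * (t ^ (m+1) - s ^ (m+1)) + (m+1) * s ^ (m+1))
          - (m+1)*(s ^ (m+1) + t ^ (m+1)))
        + (2*(m+1)*(s ^ ((m+1)/2 - 1) * t ^ ((m+1)/2 - 1)) - 2*(m+1)^2*(t ^ (m-1))) * (s*t) := by
      rw [e]; linarith [hj1]
    have h2 : 0 ≤ (2*(m+1)*(m * (t ^ (m+1) - s ^ (m+1)) + (m+1) * s ^ (m+1))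
          - (m+1)*(s ^ (m+1) + t ^ (m+1)))
        - (2*(m+1)*(s ^ ((m+1)/2 - 1) * t ^ ((m+1)/2 - 1)) - 2*(m+1)^2*(t ^ (m-1))) * (s*t) := by
      rw [e]; linarith [hj2]
    have hlb := linear_bound hp h1 h2
    linarith [hlb]
  -- scaled inequality 2 : b' ≤ 2*(m+1)^2 * D
  have S2 : m * (t ^ (m+1) - s ^ (m+1)) - ((m+1) * (t ^ (m-1) * p) - (m+1) * s ^ (m+1))
      ≤ 2 * (m+1)^2 * (s ^ (m+1) - 2 * (s ^ ((m+1)/2 - 1) * t ^ ((m+1)/2 - 1) * p) + t ^ (m+1)) := by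
    have E3' := mul_le_mul_of_nonneg_left E3 hm1.le
    have hlin : 0 ≤ m * s ^ (m+1) + t ^ (m+1)
        - 2 * ((m+1) * (s ^ ((m+1)/2) * t ^ ((m+1)/2))) + (m+1) * (s * t ^ m) := by
      linarith [E3', E1]
    have hq := mul_nonneg (show (0:ℝ) ≤ 2*(m+1)^2 - (m+1) by nlinarith) hDp
    have hm2A1 : 0 ≤ m^2 * s ^ (m+1) := mul_nonneg (sq_nonneg m) ha1
    have hm2A2 : 0 ≤ m^2 * t ^ (m+1) := mul_nonneg (sq_nonneg m) ha2
    have hmA1 : 0 ≤ m * s ^ (m+1) := mul_nonneg hm0.le ha1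
    have hmA2' : 0 ≤ m * t ^ (m+1) := mul_nonneg hm0.le ha2
    have hm2G : 0 ≤ m^2 * (s ^ ((m+1)/2) * t ^ ((m+1)/2)) := mul_nonneg (sq_nonneg m) hg0
    have hmG : 0 ≤ m * (s ^ ((m+1)/2) * t ^ ((m+1)/2)) := mul_nonneg hm0.le hg0
    have e : ((m+1)*(t ^ (m-1)) - 4*(m+1)^2*(s ^ ((m+1)/2 - 1) * t ^ ((m+1)/2 - 1))) * (s*t)
        = (m+1)*(s * t ^ m) - 4*(m+1)^2*(s ^ ((m+1)/2) * t ^ ((m+1)/2)) := by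
      linear_combination (m+1)*hTst - 4*(m+1)^2*hKst
    have h1 : 0 ≤ (2*(m+1)^2*(s ^ (m+1) + t ^ (m+1))
          - (m * (t ^ (m+1) - s ^ (m+1)) + (m+1) * s ^ (m+1)))
        + ((m+1)*(t ^ (m-1)) - 4*(m+1)^2*(s ^ ((m+1)/2 - 1) * t ^ ((m+1)/2 - 1))) * (s*t) := by
      rw [e]; linarith [hq, hlin]
    have h2 : 0 ≤ (2*(m+1)^2*(s ^ (m+1) + t ^ (m+1))
          - (m * (t ^ (m+1) - s ^ (m+1)) + (m+1) * s ^ (m+1)))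
        - ((m+1)*(t ^ (m-1)) - 4*(m+1)^2*(s ^ ((m+1)/2 - 1) * t ^ ((m+1)/2 - 1))) * (s*t) := by
      rw [e]; linarith [E2, hm2A1, hm2A2, hmA1, hmA2', hm2G, hmG, hg0, ha1, ha2]
    have hlb := linear_bound hp h1 h2
    linarith [hlb]
  constructor
  · rw [← mul_le_mul_iff_right₀ hm1]
    have hBe2 : (m+1) * (2 * (m+1) * (m / (m+1) * (t ^ (m+1) - s ^ (m+1)) - (t ^ (m-1) * p - s ^ (m+1))))
        = 2 * (m+1) * (m * (t ^ (m+1) - s ^ (m+1)) - ((m+1) * (t ^ (m-1) * p) - (m+1) * s ^ (m+1))) := by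
      field_simp; try ring
    rw [hBe2]
    linarith [S1]
  · rw [← mul_le_mul_iff_right₀ hm1]
    have hBe : (m+1) * (m / (m+1) * (t ^ (m+1) - s ^ (m+1)) - (t ^ (m-1) * p - s ^ (m+1)))
        = m * (t ^ (m+1) - s ^ (m+1)) - ((m+1) * (t ^ (m-1) * p) - (m+1) * s ^ (m+1)) := by
      field_simp; try ring
    rw [hBe]
    linarith [S2]

/-- For `m ≥ 1` there is `c = c(m) ≥ 1` with
`(1/c)|⌊u⌋^{(m+1)/2} - ⌊a⌋^{(m+1)/2}|² ≤ b[⌊u⌋^m,⌊a⌋^m] ≤ c|⌊u⌋^{(m+1)/2} - ⌊a⌋^{(m+1)/2}|²`. -/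
theorem stmt_2 (m : ℝ) (hm : 1 ≤ m) :
    ∃ c : ℝ, 1 ≤ c ∧ ∀ (N : ℕ) (u a : EuclideanSpace ℝ (Fin N)),
      (1 / c) * ‖spow ((m + 1) / 2) u - spow ((m + 1) / 2) a‖ ^ 2 ≤ bTerm m u a ∧
      bTerm m u a ≤ c * ‖spow ((m + 1) / 2) u - spow ((m + 1) / 2) a‖ ^ 2 := by
  refine ⟨2 * (m + 1), by linarith, fun N u a => ?_⟩
  have hm0 : (0:ℝ) < m := by linarith
  have hm1 : (0:ℝ) < m + 1 := by linarith
  have hβ : (0:ℝ) < (m+1)/2 := by linarith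
  have hs : (0:ℝ) ≤ ‖u‖ := norm_nonneg u
  have ht : (0:ℝ) ≤ ‖a‖ := norm_nonneg a
  have hp : |(inner ℝ u a : ℝ)| ≤ ‖u‖ * ‖a‖ := abs_real_inner_le_norm u a
  have hb : bTerm m u a = m / (m+1) * (‖a‖ ^ (m+1) - ‖u‖ ^ (m+1))
      - (‖a‖ ^ (m-1) * (inner ℝ u a : ℝ) - ‖u‖ ^ (m+1)) := by
    unfold bTerm spow
    rw [inner_sub_right, real_inner_smul_right, real_inner_smul_right,
      real_inner_self_eq_norm_sq]
    have h2 : ‖u‖ ^ (m-1) * ‖u‖ ^ 2 = ‖u‖ ^ (m+1) := by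
      rw [pow_two, ← mul_assoc, rpow_sub_one_mul hs hm0, rpow_mul_self' hs hm1]
    rw [h2]
  have hn : ‖spow ((m+1)/2) u - spow ((m+1)/2) a‖ ^ 2
      = ‖u‖ ^ (m+1) - 2 * (‖u‖ ^ ((m+1)/2 - 1) * ‖a‖ ^ ((m+1)/2 - 1) * (inner ℝ u a : ℝ))
        + ‖a‖ ^ (m+1) := by
    unfold spow
    rw [norm_sub_sq_real, norm_smul, norm_smul, real_inner_smul_left, real_inner_smul_right,
      Real.norm_eq_abs, Real.norm_eq_abs, abs_of_nonneg (Real.rpow_nonneg hs _),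
      abs_of_nonneg (Real.rpow_nonneg ht _)]
    have h1 : (‖u‖ ^ ((m+1)/2 - 1) * ‖u‖) ^ 2 = ‖u‖ ^ (m+1) := by
      rw [rpow_sub_one_mul hs hβ, ← Real.rpow_natCast (‖u‖ ^ ((m+1)/2)) 2,
        ← Real.rpow_mul hs]
      norm_num
    have h2 : (‖a‖ ^ ((m+1)/2 - 1) * ‖a‖) ^ 2 = ‖a‖ ^ (m+1) := by
      rw [rpow_sub_one_mul ht hβ, ← Real.rpow_natCast (‖a‖ ^ ((m+1)/2)) 2,
        ← Real.rpow_mul ht]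
      norm_num
    rw [h1, h2]
    ring
  obtain ⟨K1, K2⟩ := key m hm ‖u‖ ‖a‖ (inner ℝ u a : ℝ) hs ht hp
  constructor
  · rw [hb, hn]
    have he : 1/(2*(m+1)) * (2*(m+1) * (m / (m+1) * (‖a‖ ^ (m+1) - ‖u‖ ^ (m+1))
        - (‖a‖ ^ (m-1) * (inner ℝ u a : ℝ) - ‖u‖ ^ (m+1))))
        = m / (m+1) * (‖a‖ ^ (m+1) - ‖u‖ ^ (m+1))
        - (‖a‖ ^ (m-1) * (inner ℝ u a : ℝ) - ‖u‖ ^ (m+1)) := by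
      field_simp
    have hmono := mul_le_mul_of_nonneg_left K1 (by positivity : (0:ℝ) ≤ 1/(2*(m+1)))
    linarith
  · rw [hb, hn]
    exact K2
end

section
/- Let m ≥ 1. There exists a constant c = c(m) such that for all u, a ∈ ℝ^N one has b[⌊u⌋^m, ⌊a⌋^m] ≤ c·|⌊u⌋^m - ⌊a⌋^m|^{(m+1)/m}, where b[⌊u⌋^m, ⌊a⌋^m] := (m/(m+1))·(|a|^{m+1} - |u|^{m+1}) - u·(⌊a⌋^m - ⌊u⌋^m). -/
open Real

open RealInnerProductSpace

private lemma rpow_split {m : ℝ} (hm : 1 ≤ m) (x : ℝ) (hx : 0 ≤ x) :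
    x ^ (m - 1) * x ^ 2 = x ^ (m + 1) := by
  rw [← Real.rpow_natCast x 2, ← Real.rpow_add' hx (by push_cast; intro h; linarith)]
  congr 1
  push_cast
  ring

private lemma rpow_split1 {m : ℝ} (hm : 1 ≤ m) (x : ℝ) (hx : 0 ≤ x) :
    x ^ (m - 1) * x = x ^ m := by
  nth_rewrite 2 [show x = x ^ (1:ℝ) by rw [Real.rpow_one]]
  rw [← Real.rpow_add' hx (by intro h; linarith)]
  ring_nf

/-- Monotonicity: `⟪spow m x - spow m y, x - y⟫ ≥ 2^{-m} ‖x-y‖^{m+1}`. -/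
private lemma key_inner {N : ℕ} {m : ℝ} (hm : 1 ≤ m) (x y : EuclideanSpace ℝ (Fin N)) :
    (2:ℝ) ^ (-m) * ‖x - y‖ ^ (m + 1) ≤ ⟪spow m x - spow m y, x - y⟫ := by
  have hA0 : (0:ℝ) ≤ ‖x‖ := norm_nonneg _
  have hB0 : (0:ℝ) ≤ ‖y‖ := norm_nonneg _
  have hS0 : (0:ℝ) ≤ ‖x - y‖ := norm_nonneg _
  have hm1 : (0:ℝ) ≤ m - 1 := by linarith
  have hA'0 : (0:ℝ) ≤ ‖x‖ ^ (m - 1) := Real.rpow_nonneg hA0 _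
  have hB'0 : (0:ℝ) ≤ ‖y‖ ^ (m - 1) := Real.rpow_nonneg hB0 _
  have hSsq : ‖x - y‖ ^ 2 = ‖x‖ ^ 2 - 2 * ⟪x, y⟫ + ‖y‖ ^ 2 := norm_sub_sq_real x y
  have hinner : ⟪spow m x - spow m y, x - y⟫
      = ‖x‖ ^ (m - 1) * ‖x‖ ^ 2 - (‖x‖ ^ (m - 1) + ‖y‖ ^ (m - 1)) * ⟪x, y⟫
        + ‖y‖ ^ (m - 1) * ‖y‖ ^ 2 := by
    simp only [spow, inner_sub_left, inner_sub_right, real_inner_smul_left]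
    rw [real_inner_self_eq_norm_sq, real_inner_self_eq_norm_sq, real_inner_comm y x]
    ring
  have hsign : 0 ≤ (‖x‖ ^ (m - 1) - ‖y‖ ^ (m - 1)) * (‖x‖ ^ 2 - ‖y‖ ^ 2) := by
    rcases le_total ‖x‖ ‖y‖ with h | h
    · have h1 : ‖x‖ ^ (m - 1) ≤ ‖y‖ ^ (m - 1) := Real.rpow_le_rpow hA0 h hm1
      have h2 : ‖x‖ ^ 2 ≤ ‖y‖ ^ 2 := by nlinarith
      nlinarith [mul_nonneg (sub_nonneg.2 h1) (sub_nonneg.2 h2)]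
    · have h1 : ‖y‖ ^ (m - 1) ≤ ‖x‖ ^ (m - 1) := Real.rpow_le_rpow hB0 h hm1
      have h2 : ‖y‖ ^ 2 ≤ ‖x‖ ^ 2 := by nlinarith
      nlinarith [mul_nonneg (sub_nonneg.2 h1) (sub_nonneg.2 h2)]
  have hlow : (‖x‖ ^ (m - 1) + ‖y‖ ^ (m - 1)) * ‖x - y‖ ^ 2 / 2
      ≤ ⟪spow m x - spow m y, x - y⟫ := by
    rw [hinner]; nlinarith [hsign, hSsq]
  have hSm : ‖x - y‖ ^ (m - 1) ≤ 2 ^ (m - 1) * (‖x‖ ^ (m - 1) + ‖y‖ ^ (m - 1)) := by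
    have h1 : ‖x - y‖ ≤ ‖x‖ + ‖y‖ := norm_sub_le x y
    have h2 : ‖x - y‖ ^ (m - 1) ≤ (‖x‖ + ‖y‖) ^ (m - 1) := Real.rpow_le_rpow hS0 h1 hm1
    have h3 : (‖x‖ + ‖y‖) ^ (m - 1) ≤ 2 ^ (m - 1) * (‖x‖ ^ (m - 1) + ‖y‖ ^ (m - 1)) := by
      have h2pos : (0:ℝ) ≤ (2:ℝ) ^ (m - 1) := Real.rpow_nonneg (by norm_num) _
      rcases le_total ‖x‖ ‖y‖ with h | h
      · have hh : (‖x‖ + ‖y‖) ^ (m - 1) ≤ (2 * ‖y‖) ^ (m - 1) :=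
          Real.rpow_le_rpow (by linarith) (by linarith) hm1
        rw [Real.mul_rpow (by norm_num) hB0] at hh
        nlinarith [hh, hA'0]
      · have hh : (‖x‖ + ‖y‖) ^ (m - 1) ≤ (2 * ‖x‖) ^ (m - 1) :=
          Real.rpow_le_rpow (by linarith) (by linarith) hm1
        rw [Real.mul_rpow (by norm_num) hA0] at hh
        nlinarith [hh, hB'0]
    linarith
  have hLHS : (2:ℝ) ^ (-m) * ‖x - y‖ ^ (m + 1)
      = (2:ℝ) ^ (-(m-1)) * ‖x - y‖ ^ (m - 1) * ‖x - y‖ ^ 2 / 2 := by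
    rw [← rpow_split hm ‖x - y‖ hS0]
    have h22 : (2:ℝ) ^ (-m) * 2 = (2:ℝ) ^ (-(m-1)) := by
      rw [show -(m-1) = -m + 1 by ring, Real.rpow_add (by norm_num), Real.rpow_one]
    rw [← h22]
    ring
  rw [hLHS]
  have hmid : (2:ℝ) ^ (-(m-1)) * ‖x - y‖ ^ (m - 1) * ‖x - y‖ ^ 2 / 2
      ≤ (‖x‖ ^ (m - 1) + ‖y‖ ^ (m - 1)) * ‖x - y‖ ^ 2 / 2 := by
    have hstep : (2:ℝ) ^ (-(m-1)) * ‖x - y‖ ^ (m - 1) ≤ ‖x‖ ^ (m - 1) + ‖y‖ ^ (m - 1) := by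
      have h2pos : (0:ℝ) < (2:ℝ) ^ (m - 1) := Real.rpow_pos_of_pos (by norm_num) _
      have hinv : (2:ℝ) ^ (-(m-1)) = ((2:ℝ) ^ (m-1))⁻¹ := Real.rpow_neg (by norm_num) _
      rw [hinv, inv_mul_le_iff₀ h2pos]
      linarith [hSm]
    nlinarith [hstep, sq_nonneg ‖x - y‖]
  linarith

/-- Hölder continuity of the inverse: `‖x - y‖ ≤ 2 ‖spow m x - spow m y‖^{1/m}`. -/
private lemma key_holder {N : ℕ} {m : ℝ} (hm : 1 ≤ m) (x y : EuclideanSpace ℝ (Fin N)) :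
    ‖x - y‖ ≤ 2 * ‖spow m x - spow m y‖ ^ (1 / m) := by
  have hm0 : (0:ℝ) < m := by linarith
  have hD0 : (0:ℝ) ≤ ‖spow m x - spow m y‖ := norm_nonneg _
  set S := ‖x - y‖ with hS
  have hS0 : (0:ℝ) ≤ S := norm_nonneg _
  rcases eq_or_lt_of_le hS0 with h0 | hSpos
  · rw [← h0]
    positivity
  · -- from key_inner and Cauchy–Schwarz: 2^(-m) S^m ≤ ‖D‖
    have h1 : (2:ℝ) ^ (-m) * S ^ (m + 1) ≤ ‖spow m x - spow m y‖ * S := by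
      calc (2:ℝ) ^ (-m) * S ^ (m + 1) ≤ ⟪spow m x - spow m y, x - y⟫ := key_inner hm x y
        _ ≤ ‖spow m x - spow m y‖ * ‖x - y‖ := real_inner_le_norm _ _
    have hsplit : S ^ (m + 1) = S ^ m * S := by
      nth_rewrite 3 [show S = S ^ (1:ℝ) by rw [Real.rpow_one]]
      rw [← Real.rpow_add' hS0 (by intro h; linarith)]
    rw [hsplit] at h1
    have h2 : (2:ℝ) ^ (-m) * S ^ m ≤ ‖spow m x - spow m y‖ := by
      have := (mul_le_mul_iff_of_pos_right hSpos).mp (by linarith [h1] : ((2:ℝ) ^ (-m) * S ^ m) * S ≤ ‖spow m x - spow m y‖ * S)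
      exact this
    have h3 : S ^ m ≤ 2 ^ m * ‖spow m x - spow m y‖ := by
      have h2m : (0:ℝ) < (2:ℝ) ^ m := Real.rpow_pos_of_pos (by norm_num) _
      have hinv : (2:ℝ) ^ (-m) = ((2:ℝ) ^ m)⁻¹ := Real.rpow_neg (by norm_num) _
      rw [hinv] at h2
      calc S ^ m = 2 ^ m * (((2:ℝ) ^ m)⁻¹ * S ^ m) := by field_simp
        _ ≤ 2 ^ m * ‖spow m x - spow m y‖ := by
            exact mul_le_mul_of_nonneg_left h2 (le_of_lt h2m)
    -- take (1/m) powers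
    have h4 : (S ^ m) ^ (1/m) ≤ (2 ^ m * ‖spow m x - spow m y‖) ^ (1/m) :=
      Real.rpow_le_rpow (Real.rpow_nonneg hS0 _) h3 (by positivity)
    have h5 : (S ^ m) ^ (1/m) = S := by
      rw [← Real.rpow_mul hS0, mul_one_div_cancel hm0.ne', Real.rpow_one]
    have h6 : ((2:ℝ) ^ m * ‖spow m x - spow m y‖) ^ (1/m)
        = 2 * ‖spow m x - spow m y‖ ^ (1/m) := by
      rw [Real.mul_rpow (by positivity) hD0, ← Real.rpow_mul (by norm_num : (0:ℝ) ≤ 2),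
        mul_one_div_cancel hm0.ne', Real.rpow_one]
    rw [h5, h6] at h4
    exact h4

/-- For `m ≥ 1` there is `c = c(m)` with `b[⌊u⌋^m,⌊a⌋^m] ≤ c|⌊u⌋^m - ⌊a⌋^m|^{(m+1)/m}`. -/
theorem stmt_3 (m : ℝ) (hm : 1 ≤ m) :
    ∃ c : ℝ, 0 < c ∧ ∀ (N : ℕ) (u a : EuclideanSpace ℝ (Fin N)),
      bTerm m u a ≤ c * ‖spow m u - spow m a‖ ^ ((m + 1) / m) := by
  refine ⟨2, by norm_num, fun N u a => ?_⟩
  have hm0 : (0:ℝ) < m := by linarith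
  have hm1 : (0:ℝ) < m + 1 := by linarith
  set D : EuclideanSpace ℝ (Fin N) := spow m a - spow m u with hD
  have hDnorm : ‖spow m u - spow m a‖ = ‖D‖ := norm_sub_rev _ _
  have hD0 : (0:ℝ) ≤ ‖D‖ := norm_nonneg _
  have hA0 : (0:ℝ) ≤ ‖a‖ := norm_nonneg _
  have hU0 : (0:ℝ) ≤ ‖u‖ := norm_nonneg _
  -- Step 1: bTerm ≤ ⟪a - u, D⟫
  have step1 : bTerm m u a ≤ ⟪a - u, D⟫ := by
    have hexp : ⟪a - u, D⟫ = ⟪a, D⟫ - ⟪u, D⟫ := inner_sub_left a u D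
    have haD : ⟪a, D⟫ = ‖a‖ ^ (m + 1) - ‖u‖ ^ (m - 1) * ⟪a, u⟫ := by
      rw [hD]
      simp only [spow, inner_sub_right, real_inner_smul_right]
      rw [real_inner_self_eq_norm_sq, rpow_split hm ‖a‖ hA0]
    have hCS : ‖u‖ ^ (m - 1) * ⟪a, u⟫ ≤ ‖a‖ * ‖u‖ ^ m := by
      have h1 : ⟪a, u⟫ ≤ ‖a‖ * ‖u‖ := real_inner_le_norm a u
      have h2 : (0:ℝ) ≤ ‖u‖ ^ (m - 1) := Real.rpow_nonneg hU0 _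
      calc ‖u‖ ^ (m - 1) * ⟪a, u⟫ ≤ ‖u‖ ^ (m - 1) * (‖a‖ * ‖u‖) :=
            mul_le_mul_of_nonneg_left h1 h2
        _ = ‖a‖ * (‖u‖ ^ (m - 1) * ‖u‖) := by ring
        _ = ‖a‖ * ‖u‖ ^ m := by rw [rpow_split1 hm ‖u‖ hU0]
    have hpq : (m + 1).HolderConjugate ((m + 1) / m) := by
      rw [Real.holderConjugate_iff]
      constructor
      · linarith
      · field_simp
        ring
    have hyoung : ‖a‖ * ‖u‖ ^ m ≤
        ‖a‖ ^ (m + 1) / (m + 1) + (‖u‖ ^ m) ^ ((m + 1) / m) / ((m + 1) / m) :=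
      Real.young_inequality_of_nonneg hA0 (Real.rpow_nonneg hU0 _) hpq
    have hUm : (‖u‖ ^ m) ^ ((m + 1) / m) = ‖u‖ ^ (m + 1) := by
      rw [← Real.rpow_mul hU0]
      congr 1
      field_simp
    rw [hUm] at hyoung
    have hdivq : ‖u‖ ^ (m + 1) / ((m + 1) / m) = ‖u‖ ^ (m + 1) * m / (m + 1) := by
      rw [div_div_eq_mul_div]
    rw [hdivq] at hyoung
    -- combine: bTerm = m/(m+1)(A^{m+1}-U^{m+1}) - ⟪u,D⟫
    have hid : m / (m + 1) * (‖a‖ ^ (m + 1) - ‖u‖ ^ (m + 1))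
        = ‖a‖ ^ (m + 1) - (‖a‖ ^ (m + 1) / (m + 1) + ‖u‖ ^ (m + 1) * m / (m + 1)) := by
      field_simp
      ring
    have : m / (m + 1) * (‖a‖ ^ (m + 1) - ‖u‖ ^ (m + 1)) ≤ ⟪a, D⟫ := by
      rw [hid, haD]
      linarith [hCS, hyoung]
    unfold bTerm
    rw [← hD, hexp]
    linarith
  -- Step 2: Cauchy–Schwarz and the Hölder bound
  have step2 : ⟪a - u, D⟫ ≤ ‖a - u‖ * ‖D‖ := real_inner_le_norm _ _
  have step3 : ‖a - u‖ ≤ 2 * ‖D‖ ^ (1 / m) := key_holder hm a u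
  have step4 : ‖a - u‖ * ‖D‖ ≤ 2 * ‖D‖ ^ (1 / m) * ‖D‖ :=
    mul_le_mul_of_nonneg_right step3 hD0
  have step5 : 2 * ‖D‖ ^ (1 / m) * ‖D‖ = 2 * ‖D‖ ^ ((m + 1) / m) := by
    have h1 : ‖D‖ ^ (1 / m) * ‖D‖ = ‖D‖ ^ ((m + 1) / m) := by
      nth_rewrite 2 [show ‖D‖ = ‖D‖ ^ (1:ℝ) by rw [Real.rpow_one]]
      rw [← Real.rpow_add' hD0 (by positivity)]
      congr 1
      field_simp
      ring
    rw [mul_assoc, h1]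
  rw [hDnorm]
  calc bTerm m u a ≤ ⟪a - u, D⟫ := step1
    _ ≤ ‖a - u‖ * ‖D‖ := step2
    _ ≤ 2 * ‖D‖ ^ (1 / m) * ‖D‖ := step4
    _ = 2 * ‖D‖ ^ ((m + 1) / m) := step5
end

section
/- Let m ≥ 1. There exists a constant c = c(m) ≥ 1 such that for all u, a ∈ ℝ^N one has (1/c)·|⌊u⌋^m - ⌊a⌋^m|² ≤ (|u|^{m-1} + |a|^{m-1})·b[⌊u⌋^m, ⌊a⌋^m] ≤ c·|⌊u⌋^m - ⌊a⌋^m|², where b[⌊u⌋^m, ⌊a⌋^m] := (m/(m+1))·(|a|^{m+1} - |u|^{m+1}) - u·(⌊a⌋^m - ⌊u⌋^m). -/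
open Real

set_option maxHeartbeats 1000000

/-- Tangent-line inequality for `t ↦ t^e`, `e ≥ 1`, on nonneg reals. -/
lemma tangent_rpow {e : ℝ} (he : 1 ≤ e) {a b : ℝ} (ha : 0 ≤ a) (hb : 0 ≤ b) :
    b ^ e + e * b ^ (e - 1) * (a - b) ≤ a ^ e := by
  rcases hb.eq_or_lt with rfl | hb'
  · rcases he.eq_or_lt with rfl | he'
    · simp
    · rw [Real.zero_rpow (by linarith), Real.zero_rpow (by linarith)]
      simpa using Real.rpow_nonneg ha e
  · have hs : -1 ≤ a / b - 1 := by
      have : 0 ≤ a / b := div_nonneg ha hb'.le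
      linarith
    have hber := one_add_mul_self_le_rpow_one_add hs he
    rw [add_sub_cancel] at hber
    have hbe : (0:ℝ) < b ^ e := Real.rpow_pos_of_pos hb' e
    have h2 : (a / b) ^ e = a ^ e / b ^ e := Real.div_rpow ha hb'.le e
    have h3 : b ^ (e - 1) = b ^ e / b := by
      rw [Real.rpow_sub hb', Real.rpow_one]
    have h4 := mul_le_mul_of_nonneg_left hber hbe.le
    rw [h2] at h4
    have h5 : b ^ e * (a ^ e / b ^ e) = a ^ e := by
      field_simp
    rw [h5] at h4
    calc b ^ e + e * b ^ (e - 1) * (a - b)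
        = b ^ e * (1 + e * (a / b - 1)) := by rw [h3]; field_simp
      _ ≤ a ^ e := h4

lemma affine_sandwich {A B s t : ℝ} (h1 : 0 ≤ A - B * t) (h2 : 0 ≤ A + B * t)
    (hs1 : -t ≤ s) (hs2 : s ≤ t) : 0 ≤ A - B * s := by
  rcases le_total 0 B with hB | hB
  · nlinarith
  · nlinarith

section Helpers
variable {m : ℝ}

lemma idm (hm : 1 ≤ m) {t : ℝ} (ht : 0 ≤ t) : t ^ m = t ^ (m-1) * t := by
  have h : t ^ (m - 1 + 1) = t ^ (m-1) * t ^ (1:ℝ) := Real.rpow_add' ht (by linarith)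
  rw [show m - 1 + 1 = m by ring, Real.rpow_one] at h
  exact h

lemma idm1 (hm : 1 ≤ m) {t : ℝ} (ht : 0 ≤ t) : t ^ (m+1) = t ^ (m-1) * t ^ 2 := by
  have h : t ^ (m - 1 + 2) = t ^ (m-1) * t ^ (2:ℝ) := Real.rpow_add' ht (by linarith)
  rw [show m - 1 + 2 = m + 1 by ring, Real.rpow_two] at h
  exact h

lemma sq_rpow {t : ℝ} (ht : 0 ≤ t) (c : ℝ) : (t ^ c) ^ 2 = t ^ (c * 2) := by
  rw [← Real.rpow_natCast (t ^ c) 2, ← Real.rpow_mul ht]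
  norm_num

/-- `(t^2)^((m+1)/2) = t^(m-1) * t^2` -/
lemma idsq (hm : 1 ≤ m) {t : ℝ} (ht : 0 ≤ t) : (t ^ 2) ^ ((m+1)/2) = t ^ (m-1) * t ^ 2 := by
  rw [← Real.rpow_natCast t 2, ← Real.rpow_mul ht]
  rw [show (2:ℕ) * ((m+1)/2) = m + 1 by push_cast; ring, Real.rpow_natCast t 2]
  exact idm1 hm ht

/-- `(t^2)^((m+1)/2 - 1) = t^(m-1)` -/
lemma idsq' (hm : 1 ≤ m) {t : ℝ} (ht : 0 ≤ t) : (t ^ 2) ^ ((m+1)/2 - 1) = t ^ (m-1) := by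
  rw [← Real.rpow_natCast t 2, ← Real.rpow_mul ht]
  norm_num
  rw [show (2:ℝ) * ((m+1)/2 - 1) = m - 1 by ring]

/-- `(t^((m+1)/2))^2 = t^(m-1)*t^2` -/
lemma idR (hm : 1 ≤ m) {t : ℝ} (ht : 0 ≤ t) : (t ^ ((m+1)/2)) ^ 2 = t ^ (m-1) * t ^ 2 := by
  rw [sq_rpow ht, show (m+1)/2*2 = m+1 by ring]
  exact idm1 hm ht

/-- `t^((m+1)/2 - 1) * t^((m+1)/2) = t^(m-1) * t` -/
lemma idRR (hm : 1 ≤ m) {t : ℝ} (ht : 0 ≤ t) : t ^ ((m+1)/2 - 1) * t ^ ((m+1)/2) = t ^ (m-1) * t := by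
  have h : t ^ ((m+1)/2 - 1 + (m+1)/2) = t ^ ((m+1)/2 - 1) * t ^ ((m+1)/2) :=
    Real.rpow_add' ht (by intro hc; nlinarith)
  rw [show (m+1)/2 - 1 + (m+1)/2 = m by ring] at h
  rw [← h]
  exact idm hm ht

/-- `t^((m+1)/2) = t^((m-1)/2) * t` -/
lemma idRsplit (hm : 1 ≤ m) {t : ℝ} (ht : 0 ≤ t) : t ^ ((m+1)/2) = t ^ ((m-1)/2) * t := by
  have h : t ^ ((m-1)/2 + 1) = t ^ ((m-1)/2) * t ^ (1:ℝ) := Real.rpow_add' ht (by nlinarith)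
  rw [show (m-1)/2 + 1 = (m+1)/2 by ring, Real.rpow_one] at h
  exact h

/-- `(t^((m-1)/2))^2 = t^(m-1)` -/
lemma idhalf (hm : 1 ≤ m) {t : ℝ} (ht : 0 ≤ t) : (t ^ ((m-1)/2)) ^ 2 = t ^ (m-1) := by
  rw [sq_rpow ht, show (m-1)/2*2 = m-1 by ring]

end Helpers

section Scalar
variable {m x y : ℝ}

/-- tangent at `y` for exponent `m`. -/
lemma tan_m (hm : 1 ≤ m) (hx : 0 ≤ x) (hy : 0 ≤ y) :
    y^(m-1)*y + m*(y^(m-1))*(x-y) ≤ x^(m-1)*x := by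
  have h := tangent_rpow hm hx hy
  rw [idm hm hx, idm hm hy] at h
  linarith

/-- tangent at `y` for exponent `m+1`. -/
lemma tan_m1 (hm : 1 ≤ m) (hx : 0 ≤ x) (hy : 0 ≤ y) :
    y^(m-1)*y^2 + (m+1)*(y^(m-1)*y)*(x-y) ≤ x^(m-1)*x^2 := by
  have h := tangent_rpow (e := m+1) (by linarith) hx hy
  rw [show m+1-1 = m by ring, idm1 hm hx, idm1 hm hy, idm hm hy] at h
  linarith

/-- tangent at `y²` for exponent `(m+1)/2` applied to `x²`,`y²`. -/
lemma tan_sq (hm : 1 ≤ m) (hx : 0 ≤ x) (hy : 0 ≤ y) :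
    y^(m-1)*y^2 + ((m+1)/2)*(y^(m-1))*(x^2-y^2) ≤ x^(m-1)*x^2 := by
  have h := tangent_rpow (e := (m+1)/2) (by linarith) (sq_nonneg x) (sq_nonneg y)
  rw [idsq hm hx, idsq hm hy, idsq' hm hy] at h
  linarith

/-- `q y² + ((m+1)/2) q y (x-y) ≤ x^((m+1)/2) y^((m+1)/2)`. -/
lemma tan_R (hm : 1 ≤ m) (hx : 0 ≤ x) (hy : 0 ≤ y) :
    y^(m-1)*y^2 + ((m+1)/2)*(y^(m-1)*y)*(x-y) ≤ x^((m+1)/2)*y^((m+1)/2) := by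
  have h := tangent_rpow (e := (m+1)/2) (by linarith) hx hy
  have h2 := mul_le_mul_of_nonneg_right h (Real.rpow_nonneg hy ((m+1)/2))
  rw [← idR hm hy, ← idRR hm hy]
  nlinarith [h2]

/-- for `y ≤ x`:  `p (x-y)² ≤ (Rx - Ry)²`. -/
lemma tan_F6 (hm : 1 ≤ m) (hx : 0 ≤ x) (hy : 0 ≤ y) (hyx : y ≤ x) :
    x^(m-1)*(x-y)^2 ≤ (x^((m+1)/2) - y^((m+1)/2))^2 := by
  have hrx : x^((m+1)/2) = x^((m-1)/2)*x := idRsplit hm hx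
  have hry : y^((m+1)/2) = y^((m-1)/2)*y := idRsplit hm hy
  have hmono : y^((m-1)/2) ≤ x^((m-1)/2) := Real.rpow_le_rpow hy hyx (by linarith)
  have hr0 : 0 ≤ x^((m-1)/2) := Real.rpow_nonneg hx _
  have h0 : 0 ≤ x^((m-1)/2)*(x-y) := mul_nonneg hr0 (by linarith)
  have h1 : x^((m-1)/2)*(x-y) ≤ x^((m+1)/2) - y^((m+1)/2) := by
    rw [hrx, hry]
    have : y^((m-1)/2)*y ≤ x^((m-1)/2)*y := mul_le_mul_of_nonneg_right hmono hy
    nlinarith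
  have hsq := mul_self_le_mul_self h0 h1
  have hr2 : (x^((m-1)/2))^2 = x^(m-1) := idhalf hm hx
  nlinarith [hsq, hr2]


lemma polyL1 {m p q x y R S : ℝ} (hm : 1 ≤ m) (hp : 0 ≤ p) (hq : 0 ≤ q)
    (hx : 0 ≤ x) (hy : 0 ≤ y)
    (tmy : q*y + m*q*(x-y) ≤ p*x)
    (tmx : p*x + m*p*(y-x) ≤ q*y)
    (tsq : q*y^2 + ((m+1)/2)*q*(x^2-y^2) ≤ p*x^2)
    (tR : q*y^2 + ((m+1)/2)*(q*y)*(x-y) ≤ R*S)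
    (hR2 : R^2 = p*x^2) (hS2 : S^2 = q*y^2)
    (hF6 : y ≤ x → p*(x-y)^2 ≤ (R-S)^2)
    (hmxy : x ≤ y → p ≤ q) (hmyx : y ≤ x → q ≤ p) :
    (m+1)*(p*x - q*y)^2 ≤
      4*(m+1)^3 * ((p+q) * (m*(q*y^2) + p*x^2 - (m+1)*(q*(x*y)))) := by
  generalize hEdef : m*(q*y^2) + p*x^2 - (m+1)*(q*(x*y)) = E
  have hE : (m+1)*q*((x-y)^2)/2 ≤ E := by rw [← hEdef]; linarith [tsq]
  have hE0 : 0 ≤ E := le_trans (by positivity) hE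
  have hpE : 0 ≤ p*E := mul_nonneg hp hE0
  have hqE0 : 0 ≤ q*E := mul_nonneg hq hE0
  rcases le_total x y with hxy | hyx
  · have hmono : p ≤ q := hmxy hxy
    have hD0 : 0 ≤ q*y - p*x := by
      nlinarith [mul_le_mul_of_nonneg_right hmono hx, mul_le_mul_of_nonneg_left hxy hq]
    have hD : q*y - p*x ≤ m*(q*(y-x)) := by linarith [tmy]
    have hDsq := mul_self_le_mul_self hD0 hD
    have h1 := mul_le_mul_of_nonneg_left hDsq (show (0:ℝ) ≤ m+1 by linarith)
    have h2 := mul_le_mul_of_nonneg_left (mul_le_mul_of_nonneg_left hE hq)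
      (show (0:ℝ) ≤ 2*m^2 by nlinarith)
    have h3 := mul_nonneg (show (0:ℝ) ≤ 4*(m+1)^3 - 2*m^2 by nlinarith) hqE0
    have h4 := mul_nonneg (show (0:ℝ) ≤ 4*(m+1)^3 by nlinarith) hpE
    linarith [h1, h2, h3, h4]
  · have hmono : q ≤ p := hmyx hyx
    have hE2 : (R - S)^2 ≤ E := by rw [← hEdef]; nlinarith [tR, hR2, hS2]
    have hEp : p*(x-y)^2 ≤ E := le_trans (hF6 hyx) hE2
    have hD0 : 0 ≤ p*x - q*y := by
      nlinarith [mul_le_mul_of_nonneg_right hmono hy, mul_le_mul_of_nonneg_left hyx hp]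
    have hD : p*x - q*y ≤ m*(p*(x-y)) := by linarith [tmx]
    have hDsq := mul_self_le_mul_self hD0 hD
    have h1 := mul_le_mul_of_nonneg_left hDsq (show (0:ℝ) ≤ m+1 by linarith)
    have hmp : (0:ℝ) ≤ (m+1)*m^2*p := by positivity
    have h2 := mul_le_mul_of_nonneg_left hEp hmp
    have h3 := mul_nonneg (show (0:ℝ) ≤ 4*(m+1)^3 - (m+1)*m^2 by nlinarith) hpE
    have h4 := mul_nonneg (show (0:ℝ) ≤ 4*(m+1)^3 by nlinarith) hqE0
    linarith [h1, h2, h3, h4]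

lemma polyL2 {m p q x y : ℝ} (hm : 1 ≤ m) (hp : 0 ≤ p) (hq : 0 ≤ q)
    (hx : 0 ≤ x) (hy : 0 ≤ y)
    (tmy : q*y + m*q*(x-y) ≤ p*x)
    (tmx : p*x + m*p*(y-x) ≤ q*y)
    (tm1y : q*y^2 + (m+1)*(q*y)*(x-y) ≤ p*x^2)
    (tsq : q*y^2 + ((m+1)/2)*q*(x^2-y^2) ≤ p*x^2)
    (hmxy : x ≤ y → p ≤ q) (hmyx : y ≤ x → q ≤ p) :
    (p+q) * (m*(q*y^2) + p*x^2 - (m+1)*(q*(x*y))) ≤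
      4*(m+1)^3 * ((m+1)*(p*x - q*y)^2) := by
  generalize hEdef : m*(q*y^2) + p*x^2 - (m+1)*(q*(x*y)) = E
  have hE : (m+1)*q*((x-y)^2)/2 ≤ E := by rw [← hEdef]; linarith [tsq]
  have hE0 : 0 ≤ E := le_trans (by positivity) hE
  rcases le_total x y with hxy | hyx
  · have hmono : p ≤ q := hmxy hxy
    -- E ≤ m*(m+1)*(y-x)*(q*y-p*x) ≤ m^2*(m+1)*q*(y-x)^2
    have hA := mul_le_mul_of_nonneg_left
      (show q*y^2 - p*x^2 ≤ (m+1)*(q*y)*(y-x) by linarith [tm1y])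
      (show (0:ℝ) ≤ m by linarith)
    have hB := mul_le_mul_of_nonneg_left
      (show m*(p*(y-x)) ≤ q*y - p*x by linarith [tmx])
      (mul_nonneg (show (0:ℝ) ≤ m+1 by linarith) hx)
    have s1 : E ≤ m*(m+1)*((y-x)*(q*y - p*x)) := by rw [← hEdef]; nlinarith [hA, hB]
    have s2 := mul_le_mul_of_nonneg_left
      (show q*y - p*x ≤ m*(q*(y-x)) by linarith [tmy])
      (mul_nonneg (mul_nonneg (show (0:ℝ) ≤ m by linarith)
        (show (0:ℝ) ≤ m+1 by linarith)) (show (0:ℝ) ≤ y - x by linarith))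
    have hEup : E ≤ m^2*(m+1)*(q*(y-x)^2) := by nlinarith [s1, s2]
    have hQ : q*(y-x) ≤ q*y - p*x := by
      nlinarith [mul_le_mul_of_nonneg_right hmono hx]
    have hQ0 : 0 ≤ q*(y-x) := mul_nonneg hq (by linarith)
    have hQsq := mul_self_le_mul_self hQ0 hQ
    have g1 := mul_nonneg (sub_nonneg.2 hmono) hE0
    have g2 := mul_le_mul_of_nonneg_left hEup (show (0:ℝ) ≤ 2*q by linarith)
    have g3 := mul_le_mul_of_nonneg_left hQsq (show (0:ℝ) ≤ 2*m^2*(m+1) by nlinarith)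
    have g4 := mul_nonneg (show (0:ℝ) ≤ (4*(m+1)^3 - 2*m^2)*(m+1) by nlinarith)
      (sq_nonneg (p*x - q*y))
    nlinarith [g1, g2, g3, g4]
  · have hmono : q ≤ p := hmyx hyx
    have hA := mul_le_mul_of_nonneg_left
      (show q*y^2 - p*x^2 ≤ -((m+1)*(q*y)*(x-y)) by linarith [tm1y])
      (show (0:ℝ) ≤ m by linarith)
    have hB := mul_le_mul_of_nonneg_left
      (show p*x - q*y ≤ m*(p*(x-y)) by linarith [tmx])
      (mul_nonneg (show (0:ℝ) ≤ m+1 by linarith) hx)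
    have s1 : E ≤ m*(m+1)*((x-y)*(p*x - q*y)) := by rw [← hEdef]; nlinarith [hA, hB]
    have s2 := mul_le_mul_of_nonneg_left
      (show p*x - q*y ≤ m*(p*(x-y)) by linarith [tmx])
      (mul_nonneg (mul_nonneg (show (0:ℝ) ≤ m by linarith)
        (show (0:ℝ) ≤ m+1 by linarith)) (show (0:ℝ) ≤ x - y by linarith))
    have hEup : E ≤ m^2*(m+1)*(p*(x-y)^2) := by nlinarith [s1, s2]
    have hQ : p*(x-y) ≤ p*x - q*y := by
      nlinarith [mul_le_mul_of_nonneg_right hmono hy]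
    have hQ0 : 0 ≤ p*(x-y) := mul_nonneg hp (by linarith)
    have hQsq := mul_self_le_mul_self hQ0 hQ
    have g1 := mul_nonneg (sub_nonneg.2 hmono) hE0
    have g2 := mul_le_mul_of_nonneg_left hEup (show (0:ℝ) ≤ 2*p by linarith)
    have g3 := mul_le_mul_of_nonneg_left hQsq (show (0:ℝ) ≤ 2*m^2*(m+1) by nlinarith)
    have g4 := mul_nonneg (show (0:ℝ) ≤ (4*(m+1)^3 - 2*m^2)*(m+1) by nlinarith)
      (sq_nonneg (p*x - q*y))
    nlinarith [g1, g2, g3, g4]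

lemma polyL3 {m p q x y : ℝ} (hm : 1 ≤ m) (hp : 0 ≤ p) (hq : 0 ≤ q)
    (hx : 0 ≤ x) (hy : 0 ≤ y) :
    (m+1)*(p*x + q*y)^2 ≤
      4*(m+1)^3 * ((p+q) * (m*(q*y^2) + p*x^2 + (m+1)*(q*(x*y)))) := by
  have hS2 : (p*x + q*y)^2 ≤ (p+q) * (m*(q*y^2) + p*x^2 + (m+1)*(q*(x*y))) := by
    nlinarith [mul_nonneg (mul_nonneg hp hq) (sq_nonneg y),
      mul_nonneg (mul_nonneg (mul_nonneg (sub_nonneg.2 hm) hq) hq) (sq_nonneg y),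
      mul_nonneg (mul_nonneg hp hq) (sq_nonneg x),
      mul_nonneg (mul_nonneg (mul_nonneg (sub_nonneg.2 hm) hp) hq) (mul_nonneg hx hy),
      mul_nonneg (mul_nonneg (mul_nonneg (show (0:ℝ) ≤ m+1 by linarith) hq) hq)
        (mul_nonneg hx hy)]
  have h0 : 0 ≤ (p+q) * (m*(q*y^2) + p*x^2 + (m+1)*(q*(x*y))) :=
    le_trans (sq_nonneg _) hS2
  have h1 := mul_le_mul_of_nonneg_left hS2 (show (0:ℝ) ≤ m+1 by linarith)
  have h2 := mul_nonneg (show (0:ℝ) ≤ 4*(m+1)^3 - (m+1) by nlinarith [mul_nonneg (mul_nonneg (by linarith : (0:ℝ) ≤ m) (by linarith : (0:ℝ) ≤ m)) (by linarith : (0:ℝ) ≤ m), sq_nonneg m]) h0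
  linarith [h1, h2]

lemma polyL4 {m p q x y : ℝ} (hm : 1 ≤ m) (hp : 0 ≤ p) (hq : 0 ≤ q)
    (hx : 0 ≤ x) (hy : 0 ≤ y)
    (hmxy : x ≤ y → p ≤ q) (hmyx : y ≤ x → q ≤ p) :
    (p+q) * (m*(q*y^2) + p*x^2 + (m+1)*(q*(x*y))) ≤
      4*(m+1)^3 * ((m+1)*(p*x + q*y)^2) := by
  have hCheb : q*x + p*y ≤ p*x + q*y := by
    rcases le_total x y with h' | h'
    · nlinarith [mul_nonneg (sub_nonneg.2 (hmxy h')) (sub_nonneg.2 h')]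
    · nlinarith [mul_nonneg (sub_nonneg.2 (hmyx h')) (sub_nonneg.2 h')]
  have hS0 : 0 ≤ p*x + q*y := by positivity
  have hpy : p*y ≤ p*x + q*y := by nlinarith [mul_nonneg hq hx]
  have hqx : q*x ≤ p*x + q*y := by nlinarith [mul_nonneg hp hy]
  have hpx : p*x ≤ p*x + q*y := by nlinarith [mul_nonneg hq hy]
  have hqy : q*y ≤ p*x + q*y := by nlinarith [mul_nonneg hp hx]
  have hpy0 : 0 ≤ p*y := mul_nonneg hp hy
  have hqx0 : 0 ≤ q*x := mul_nonneg hq hx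
  have hpx0 : 0 ≤ p*x := mul_nonneg hp hx
  have hqy0 : 0 ≤ q*y := mul_nonneg hq hy
  have t1 := mul_le_mul hpy hqy hqy0 hS0
  have t2 := mul_le_mul hqy hqy hqy0 hS0
  have t3 := mul_le_mul hpx hpx hpx0 hS0
  have t4 := mul_le_mul hpx hqx hqx0 hS0
  have t5 := mul_le_mul hpx hqy hqy0 hS0
  have t6 := mul_le_mul hqx hqy hqy0 hS0
  have hSS : 0 ≤ (p*x + q*y)*(p*x + q*y) := mul_nonneg hS0 hS0
  have hm1 : 0 ≤ m - 1 := by linarith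
  have u1 := mul_le_mul_of_nonneg_left t1 (show (0:ℝ) ≤ m by linarith)
  have u2 := mul_le_mul_of_nonneg_left t2 (show (0:ℝ) ≤ m by linarith)
  have u5 := mul_le_mul_of_nonneg_left t5 (show (0:ℝ) ≤ m+1 by linarith)
  have u6 := mul_le_mul_of_nonneg_left t6 (show (0:ℝ) ≤ m+1 by linarith)
  have h7 := mul_nonneg (show (0:ℝ) ≤ 4*(m+1)^3*(m+1) - (4*m+4) by nlinarith [mul_nonneg (mul_nonneg (by linarith : (0:ℝ) ≤ m) (by linarith : (0:ℝ) ≤ m)) (by linarith : (0:ℝ) ≤ m), mul_nonneg (mul_nonneg (mul_nonneg (by linarith : (0:ℝ) ≤ m) (by linarith : (0:ℝ) ≤ m)) (by linarith : (0:ℝ) ≤ m)) (by linarith : (0:ℝ) ≤ m), sq_nonneg m]) hSS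
  nlinarith [u1, u2, t3, t4, u5, u6, h7]

end Scalar

/-- For `m ≥ 1` there is `c = c(m) ≥ 1` with
`(1/c)|⌊u⌋^m - ⌊a⌋^m|² ≤ (|u|^{m-1} + |a|^{m-1}) b[⌊u⌋^m,⌊a⌋^m] ≤ c|⌊u⌋^m - ⌊a⌋^m|²`. -/
theorem stmt_4 (m : ℝ) (hm : 1 ≤ m) :
    ∃ c : ℝ, 1 ≤ c ∧ ∀ (N : ℕ) (u a : EuclideanSpace ℝ (Fin N)),
      (1 / c) * ‖spow m u - spow m a‖ ^ 2 ≤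
        (‖u‖ ^ (m - 1) + ‖a‖ ^ (m - 1)) * bTerm m u a ∧
      (‖u‖ ^ (m - 1) + ‖a‖ ^ (m - 1)) * bTerm m u a ≤
        c * ‖spow m u - spow m a‖ ^ 2 := by
  have hm0 : (0:ℝ) ≤ m := by linarith
  have hm1 : (0:ℝ) < m + 1 := by linarith
  have hc : (1:ℝ) ≤ 4*(m+1)^3 := by nlinarith [mul_nonneg (mul_nonneg hm0 hm0) hm0, sq_nonneg m]
  have hc0 : (0:ℝ) < 4*(m+1)^3 := by linarith
  refine ⟨4*(m+1)^3, hc, ?_⟩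
  intro N u a
  have hx : (0:ℝ) ≤ ‖u‖ := norm_nonneg u
  have hy : (0:ℝ) ≤ ‖a‖ := norm_nonneg a
  have hp : (0:ℝ) ≤ ‖u‖^(m-1) := Real.rpow_nonneg hx _
  have hq : (0:ℝ) ≤ ‖a‖^(m-1) := Real.rpow_nonneg hy _
  obtain ⟨hs1, hs2⟩ := abs_le.mp (abs_real_inner_le_norm u a)
  have hNsq : ‖spow m u - spow m a‖^2 =
      (‖u‖^(m-1))^2*‖u‖^2 - 2*((‖u‖^(m-1))*(‖a‖^(m-1))*(inner ℝ u a : ℝ))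
        + (‖a‖^(m-1))^2*‖a‖^2 := by
    rw [show spow m u = ‖u‖^(m-1) • u from rfl, show spow m a = ‖a‖^(m-1) • a from rfl,
      norm_sub_sq_real, real_inner_smul_left, real_inner_smul_right,
      norm_smul, norm_smul, Real.norm_eq_abs, Real.norm_eq_abs,
      abs_of_nonneg hp, abs_of_nonneg hq]
    ring
  have hBT : bTerm m u a =
      m/(m+1)*((‖a‖^(m-1))*‖a‖^2 - (‖u‖^(m-1))*‖u‖^2)
        - ((‖a‖^(m-1))*(inner ℝ u a : ℝ) - (‖u‖^(m-1))*‖u‖^2) := by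
    unfold bTerm
    rw [show spow m a = ‖a‖^(m-1) • a from rfl, show spow m u = ‖u‖^(m-1) • u from rfl,
      inner_sub_right, real_inner_smul_right, real_inner_smul_right,
      real_inner_self_eq_norm_sq, idm1 hm hx, idm1 hm hy]
    try ring
  -- mono helpers
  have hmxy : ‖u‖ ≤ ‖a‖ → ‖u‖^(m-1) ≤ ‖a‖^(m-1) :=
    fun h => Real.rpow_le_rpow hx h (by linarith)
  have hmyx : ‖a‖ ≤ ‖u‖ → ‖a‖^(m-1) ≤ ‖u‖^(m-1) :=
    fun h => Real.rpow_le_rpow hy h (by linarith)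
  -- instantiated scalar lemmas (x := ‖u‖, y := ‖a‖)
  have L1 := polyL1 hm hp hq hx hy (tan_m hm hx hy) (tan_m hm hy hx) (tan_sq hm hx hy)
    (tan_R hm hx hy) (idR hm hx) (idR hm hy) (tan_F6 hm hx hy) hmxy hmyx
  have L2 := polyL2 hm hp hq hx hy (tan_m hm hx hy) (tan_m hm hy hx) (tan_m1 hm hx hy)
    (tan_sq hm hx hy) hmxy hmyx
  have L3 := polyL3 (p := ‖u‖^(m-1)) (q := ‖a‖^(m-1)) hm hp hq hx hy
  have L4 := polyL4 hm hp hq hx hy hmxy hmyx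
  set s : ℝ := (inner ℝ u a : ℝ) with hsdef
  have hBTe : bTerm m u a = (m*((‖a‖^(m-1))*‖a‖^2 - (‖u‖^(m-1))*‖u‖^2)
      - (m+1)*((‖a‖^(m-1))*s - (‖u‖^(m-1))*‖u‖^2)) / (m+1) := by
    rw [hBT, eq_div_iff hm1.ne']
    field_simp
  constructor
  · -- lower bound
    have key := affine_sandwich
      (A := 4*(m+1)^3*((‖u‖^(m-1)+‖a‖^(m-1))*(m*((‖a‖^(m-1))*‖a‖^2) + (‖u‖^(m-1))*‖u‖^2))
        - (m+1)*((‖u‖^(m-1))^2*‖u‖^2 + (‖a‖^(m-1))^2*‖a‖^2))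
      (B := 4*(m+1)^3*((‖u‖^(m-1)+‖a‖^(m-1))*((m+1)*(‖a‖^(m-1))))
        - (m+1)*(2*((‖u‖^(m-1))*(‖a‖^(m-1)))))
      (s := s) (t := ‖u‖*‖a‖)
      (by linarith [L1]) (by linarith [L3]) hs1 hs2
    rw [hNsq, hBTe, ← mul_div_assoc, one_div_mul_eq_div, div_le_div_iff₀ hc0 hm1]
    nlinarith [key]
  · -- upper bound
    have key := affine_sandwich
      (A := 4*(m+1)^3*((m+1)*((‖u‖^(m-1))^2*‖u‖^2 + (‖a‖^(m-1))^2*‖a‖^2))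
        - (‖u‖^(m-1)+‖a‖^(m-1))*(m*((‖a‖^(m-1))*‖a‖^2) + (‖u‖^(m-1))*‖u‖^2))
      (B := 4*(m+1)^3*((m+1)*(2*((‖u‖^(m-1))*(‖a‖^(m-1)))))
        - (‖u‖^(m-1)+‖a‖^(m-1))*((m+1)*(‖a‖^(m-1))))
      (s := s) (t := ‖u‖*‖a‖)
      (by linarith [L2]) (by linarith [L4]) hs1 hs2
    rw [hNsq, hBTe, ← mul_div_assoc, div_le_iff₀ hm1]
    nlinarith [key]
end

section
/- Let m ≥ 1. There exists a constant c = c(m) such that for every bounded measurable set A ⊂ ℝ^n of positive finite measure, every u ∈ L^{m+1}(A, ℝ^N), and every a ∈ ℝ^N, the mean value (u)_A := ⨍_A u dx satisfies ⨍_A b[u(x), (u)_A] dx ≤ c · ⨍_A b[u(x), a] dx, where b[u, a] := (m/(m+1))·(|a|^{m+1} - |u|^{m+1}) - u·(⌊a⌋^m - ⌊u⌋^m) — here the arguments of b are written in the 'unpowered' variables u, a. -/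
open Real MeasureTheory

lemma inner_spow_self {N : ℕ} {m : ℝ} (hm : 1 ≤ m) (v : EuclideanSpace ℝ (Fin N)) :
    (inner ℝ v (spow m v) : ℝ) = ‖v‖ ^ (m + 1) := by
  rcases eq_or_ne v 0 with rfl | hv
  · simp [spow, Real.zero_rpow (by positivity : m + 1 ≠ 0)]
  · have hv' : (0:ℝ) < ‖v‖ := norm_pos_iff.mpr hv
    rw [spow, real_inner_smul_right, real_inner_self_eq_norm_sq]
    rw [show ‖v‖ ^ 2 = ‖v‖ ^ (2:ℝ) by rw [← Real.rpow_natCast ‖v‖ 2]; norm_num]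
    rw [← Real.rpow_add hv']
    ring_nf

lemma inner_spow_le {N : ℕ} {m : ℝ} (hm : 1 ≤ m) (v a : EuclideanSpace ℝ (Fin N)) :
    (inner ℝ v (spow m a) : ℝ) ≤ 1 / (m + 1) * ‖v‖ ^ (m + 1) + m / (m + 1) * ‖a‖ ^ (m + 1) := by
  have h1 : (inner ℝ v (spow m a) : ℝ) ≤ ‖v‖ * ‖a‖ ^ m := by
    rcases eq_or_ne a 0 with rfl | ha
    · simp [spow, Real.zero_rpow (by positivity : m ≠ 0)]
    · have ha' : (0:ℝ) < ‖a‖ := norm_pos_iff.mpr ha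
      rw [spow, real_inner_smul_right]
      calc ‖a‖ ^ (m - 1) * (inner ℝ v a : ℝ) ≤ ‖a‖ ^ (m - 1) * (‖v‖ * ‖a‖) := by
            apply mul_le_mul_of_nonneg_left (real_inner_le_norm v a) (by positivity)
        _ = ‖v‖ * ‖a‖ ^ m := by
            rw [show ‖a‖ ^ (m-1) * (‖v‖ * ‖a‖) = ‖v‖ * (‖a‖ ^ (m-1) * ‖a‖ ^ (1:ℝ)) by
              rw [Real.rpow_one]; ring, ← Real.rpow_add ha']
            ring_nf
  refine h1.trans ?_
  have hpq : Real.HolderConjugate (m + 1) ((m + 1) / m) := by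
    rw [Real.holderConjugate_iff]; constructor
    · linarith
    · field_simp; ring
  have := Real.young_inequality_of_nonneg (norm_nonneg v)
    (Real.rpow_nonneg (norm_nonneg a) m) hpq
  calc ‖v‖ * ‖a‖ ^ m ≤ ‖v‖ ^ (m+1) / (m+1) + (‖a‖ ^ m) ^ ((m+1)/m) / ((m+1)/m) := this
    _ = 1 / (m + 1) * ‖v‖ ^ (m + 1) + m / (m + 1) * ‖a‖ ^ (m + 1) := by
        rw [← Real.rpow_mul (norm_nonneg a)]
        rw [show m * ((m+1)/m) = m + 1 by field_simp]
        field_simp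

lemma key_ineq {N : ℕ} {m : ℝ} (hm : 1 ≤ m) (v a : EuclideanSpace ℝ (Fin N)) :
    m / (m + 1) * ‖v‖ ^ (m + 1) - (inner ℝ v (spow m v) : ℝ) ≤
      m / (m + 1) * ‖a‖ ^ (m + 1) - (inner ℝ v (spow m a) : ℝ) := by
  have h1 := inner_spow_le hm v a
  rw [inner_spow_self hm]
  have hne : m + 1 ≠ 0 := by positivity
  have h2 : m / (m + 1) * ‖v‖ ^ (m + 1) - ‖v‖ ^ (m + 1)
      = -(1 / (m + 1) * ‖v‖ ^ (m + 1)) := by field_simp; ring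
  rw [h2]; linarith

lemma bTerm_eq {N : ℕ} {m : ℝ} (hm : 1 ≤ m) (u w : EuclideanSpace ℝ (Fin N)) :
    bTerm m u w = m / (m + 1) * ‖w‖ ^ (m + 1) + 1 / (m + 1) * ‖u‖ ^ (m + 1)
      - (inner ℝ u (spow m w) : ℝ) := by
  have hne : m + 1 ≠ 0 := by positivity
  rw [bTerm, inner_sub_right, inner_spow_self hm]
  field_simp
  ring

/-- For `m ≥ 1` there is `c = c(m)` such that for every bounded measurable
`A ⊂ ℝ^n` of positive finite measure, every `u ∈ L^{m+1}(A, ℝ^N)` and every `a ∈ ℝ^N`: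
`⨍_A b[u, (u)_A] ≤ c ⨍_A b[u, a]`. -/
theorem stmt_5 (m : ℝ) (hm : 1 ≤ m) :
    ∃ c : ℝ, 0 < c ∧ ∀ (n N : ℕ) (A : Set (EuclideanSpace ℝ (Fin n)))
      (u : EuclideanSpace ℝ (Fin n) → EuclideanSpace ℝ (Fin N))
      (a : EuclideanSpace ℝ (Fin N)),
      MeasurableSet A → Bornology.IsBounded A → 0 < volume A → volume A < ⊤ →
      MemLp u (ENNReal.ofReal (m + 1)) (volume.restrict A) →
      ⨍ x in A, bTerm m (u x) (⨍ y in A, u y) ≤ c * ⨍ x in A, bTerm m (u x) a := by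
  refine ⟨1, one_pos, ?_⟩
  intro n N A u a hA hb hpos hfin hmem
  set μ := volume.restrict A with hμ
  haveI : IsFiniteMeasure μ := by
    constructor
    rw [hμ, Measure.restrict_apply_univ]
    exact hfin
  have hμuniv : μ Set.univ = volume A := Measure.restrict_apply_univ A
  set V : ℝ := (μ Set.univ).toReal with hV
  have hVpos : 0 < V := by
    rw [hV, hμuniv]
    exact ENNReal.toReal_pos hpos.ne' hfin.ne
  have hu1 : Integrable u μ :=
    hmem.integrable (ENNReal.one_le_ofReal.mpr (by linarith))
  have hup : Integrable (fun x => ‖u x‖ ^ (m + 1)) μ := by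
    have := hmem.integrable_norm_rpow (by simp; linarith) (by simp)
    rwa [ENNReal.toReal_ofReal (by linarith)] at this
  have hinner : ∀ w : EuclideanSpace ℝ (Fin N),
      Integrable (fun x => (inner ℝ (u x) (spow m w) : ℝ)) μ := by
    intro w
    have : (fun x => (inner ℝ (u x) (spow m w) : ℝ))
        = fun x => (innerSL ℝ (spow m w)) (u x) := by
      funext x; rw [innerSL_apply_apply, real_inner_comm]
    rw [this]
    exact (innerSL ℝ (spow m w)).integrable_comp hu1
  have hI : ∀ w : EuclideanSpace ℝ (Fin N),
      ∫ x, (inner ℝ (u x) (spow m w) : ℝ) ∂μ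
        = (inner ℝ (∫ x, u x ∂μ) (spow m w) : ℝ) := by
    intro w
    rw [show (fun x => (inner ℝ (u x) (spow m w) : ℝ)) = fun x => (inner ℝ (spow m w) (u x) : ℝ)
      from funext fun x => real_inner_comm _ _, integral_inner hu1 (spow m w),
      real_inner_comm]
  set K : ℝ := ∫ x, ‖u x‖ ^ (m + 1) ∂μ with hK
  set I : EuclideanSpace ℝ (Fin N) := ∫ x, u x ∂μ with hIdef
  set ub : EuclideanSpace ℝ (Fin N) := ⨍ y in A, u y with hub
  have hubar : ub = V⁻¹ • I := by
    rw [hub, ← hμ, average_eq]; rfl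
  have havg : ∀ w : EuclideanSpace ℝ (Fin N),
      (⨍ x in A, bTerm m (u x) w)
        = V⁻¹ * (V * (m / (m + 1) * ‖w‖ ^ (m + 1)) + 1 / (m + 1) * K
            - (inner ℝ I (spow m w) : ℝ)) := by
    intro w
    rw [← hμ, average_eq, smul_eq_mul]
    congr 1
    have : ∀ x, bTerm m (u x) w = m / (m + 1) * ‖w‖ ^ (m + 1)
        + 1 / (m + 1) * ‖u x‖ ^ (m + 1) - (inner ℝ (u x) (spow m w) : ℝ) :=
      fun x => bTerm_eq hm (u x) w
    rw [integral_congr_ae (Filter.Eventually.of_forall this)]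
    rw [integral_sub (by
      exact (integrable_const _).add (hup.const_mul _)) (hinner w)]
    rw [integral_add (integrable_const _) (hup.const_mul _)]
    rw [integral_const, integral_const_mul, hI w, smul_eq_mul]; rfl
  have hInner_I : ∀ z : EuclideanSpace ℝ (Fin N),
      (inner ℝ I z : ℝ) = V * (inner ℝ ub z : ℝ) := by
    intro z
    rw [hubar, real_inner_smul_left]
    field_simp
  rw [havg a, havg ub, one_mul]
  apply mul_le_mul_of_nonneg_left _ (by positivity : (0:ℝ) ≤ V⁻¹)
  rw [hInner_I, hInner_I]
  have hkey := key_ineq hm ub a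
  nlinarith [mul_le_mul_of_nonneg_left hkey hVpos.le]
end
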